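/- Let n ≥ 1 and let X ∈ M_n(ℂ) be symmetric (Xᵀ = X). Then in M_n(ℍ): [jX, j(iX)] = ι(−2i·X̄·X), and λ([jX, j(iX)]) = −2·Σ_{k,l} |X_{kl}|², where for a quaternionic matrix M one sets λ(M) := −Re( i · Σ_k M_{kk} ) (quaternionic real part, i the quaternion unit). In particular λ([jX, j(iX)]) < 0 whenever X ≠ 0. -/

import Mathlib

noncomputable section

open Matrix

/-- The ring embedding `ℂ → ℍ` sending `a + b i` to the quaternion with real part `a`
and `i`-part `b`. -/
def iotaC : ℂ →+* Quaternion ℝ where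
  toFun z := ⟨z.re, z.im, 0, 0⟩
  map_one' := by ext <;> simp [Quaternion.re_one, Quaternion.imI_one, Quaternion.imJ_one, Quaternion.imK_one]
  map_mul' z w := by
    change (QuaternionAlgebra.mk _ _ _ _ : QuaternionAlgebra ℝ (-1) 0 (-1)) =
      QuaternionAlgebra.mk _ _ _ _ * QuaternionAlgebra.mk _ _ _ _
    erw [QuaternionAlgebra.mk_mul_mk]
    ext <;>
      simp [Complex.mul_re, Complex.mul_im, sub_eq_add_neg]
  map_zero' := by ext <;> simp [Quaternion.re_zero, Quaternion.imI_zero, Quaternion.imJ_zero, Quaternion.imK_zero]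
  map_add' z w := by
    change (QuaternionAlgebra.mk _ _ _ _ : QuaternionAlgebra ℝ (-1) 0 (-1)) =
      QuaternionAlgebra.mk _ _ _ _ + QuaternionAlgebra.mk _ _ _ _
    erw [QuaternionAlgebra.mk_add_mk]
    ext <;> simp

/-- The quaternion unit `i`. -/
def iq : Quaternion ℝ := ⟨0, 1, 0, 0⟩

/-- The quaternion unit `j`. -/
def jq : Quaternion ℝ := ⟨0, 0, 1, 0⟩

/-- For a complex matrix `X`, `jMat X` is the quaternionic matrix whose `(k,l)` entry is
`j · ι(X k l)`. -/
def jMat {ι κ : Type*} (X : Matrix ι κ ℂ) : Matrix ι κ (Quaternion ℝ) :=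
  Matrix.of fun k l => jq * iotaC (X k l)

/-- The invariant linear form `λ(M) = −Re(i·Σ_k M_{kk})` on quaternionic matrices. -/
def lamForm {n : ℕ} (M : Matrix (Fin n) (Fin n) (Quaternion ℝ)) : ℝ :=
  -(iq * ∑ k, M k k).re


lemma iotaC_re (z : ℂ) : (iotaC z).re = z.re := rfl
lemma iotaC_imI (z : ℂ) : (iotaC z).imI = z.im := rfl
lemma iotaC_imJ (z : ℂ) : (iotaC z).imJ = 0 := rfl
lemma iotaC_imK (z : ℂ) : (iotaC z).imK = 0 := rfl
lemma jq_re : jq.re = 0 := rfl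
lemma jq_imI : jq.imI = 0 := rfl
lemma jq_imJ : jq.imJ = 1 := rfl
lemma jq_imK : jq.imK = 0 := rfl
lemma iq_re : iq.re = 0 := rfl
lemma iq_imI : iq.imI = 1 := rfl
lemma iq_imJ : iq.imJ = 0 := rfl
lemma iq_imK : iq.imK = 0 := rfl

lemma keyA (z w : ℂ) : (jq * iotaC z) * (jq * iotaC w) = iotaC (-(starRingEnd ℂ z * w)) := by
  ext <;>
    simp [jq_re, jq_imI, jq_imJ, jq_imK, iotaC_re, iotaC_imI, iotaC_imJ, iotaC_imK, Quaternion.re_mul, Quaternion.imI_mul, Quaternion.imJ_mul,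
      Quaternion.imK_mul, Complex.mul_re, Complex.mul_im] <;> ring

lemma hre (c : ℂ) : -(iq * iotaC c).re = c.im := by
  simp [iq_re, iq_imI, iq_imJ, iq_imK, iotaC_re, iotaC_imI, iotaC_imJ, iotaC_imK, Quaternion.re_mul]

lemma main_eq (n : ℕ)
    (X : Matrix (Fin n) (Fin n) ℂ) :
    jMat X * jMat (Complex.I • X) - jMat (Complex.I • X) * jMat X =
      (((-2 * Complex.I) • (X.map (starRingEnd ℂ) * X))).map iotaC := by
  refine Matrix.ext fun k l => ?_
  simp only [Matrix.sub_apply, Matrix.mul_apply, jMat, of_apply, Matrix.map_apply,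
    Matrix.smul_apply, smul_eq_mul]
  rw [← Finset.sum_sub_distrib]
  have key : ∀ m : Fin n, jq * iotaC (X k m) * (jq * iotaC (Complex.I * X m l)) -
      jq * iotaC (Complex.I * X k m) * (jq * iotaC (X m l)) =
      iotaC ((-2 * Complex.I) * (starRingEnd ℂ (X k m) * X m l)) := by
    intro m
    rw [keyA, keyA, ← map_sub]
    congr 1
    simp only [_root_.map_mul, Complex.conj_I]
    ring
  rw [Finset.sum_congr rfl fun m _ => key m, ← map_sum, ← Finset.mul_sum]

lemma lam_eq (n : ℕ)
    (X : Matrix (Fin n) (Fin n) ℂ) (hX : Xᵀ = X) :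
    lamForm (jMat X * jMat (Complex.I • X) - jMat (Complex.I • X) * jMat X) =
      -2 * ∑ k, ∑ l, ‖X k l‖ ^ 2 := by
  rw [main_eq, lamForm]
  simp only [Matrix.map_apply]
  rw [← map_sum, hre]
  have hX' : ∀ m k : Fin n, X m k = X k m := fun m k => by
    rw [← X.transpose_apply k m, hX]
  simp only [Matrix.smul_apply, Matrix.mul_apply, Matrix.map_apply, smul_eq_mul]
  rw [Complex.im_sum, Finset.mul_sum]
  refine Finset.sum_congr rfl fun i _ => ?_
  have h1 : ∀ x : Fin n, starRingEnd ℂ (X i x) * X x i =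
      ((‖X i x‖ ^ 2 : ℝ) : ℂ) := fun x => by
    rw [hX' x i, Complex.sq_norm, mul_comm, Complex.mul_conj]
  rw [Finset.sum_congr rfl fun x _ => h1 x, ← Complex.ofReal_sum]
  simp [Complex.mul_im, ← Complex.ofReal_pow]

/-- For a symmetric complex matrix `X`: `[jX, j(iX)] = ι(−2i X̄ X)` and
`λ([jX, j(iX)]) = −2 Σ_{k,l} |X_{kl}|²`; in particular `λ([jX, j(iX)]) < 0` if `X ≠ 0`. -/
theorem anisotropy_sp (n : ℕ) (hn : 1 ≤ n)
    (X : Matrix (Fin n) (Fin n) ℂ) (hX : Xᵀ = X) :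
    jMat X * jMat (Complex.I • X) - jMat (Complex.I • X) * jMat X =
      (((-2 * Complex.I) • (X.map (starRingEnd ℂ) * X))).map iotaC ∧
    lamForm (jMat X * jMat (Complex.I • X) - jMat (Complex.I • X) * jMat X) =
      -2 * ∑ k, ∑ l, ‖X k l‖ ^ 2 ∧
    (X ≠ 0 →
      lamForm (jMat X * jMat (Complex.I • X) - jMat (Complex.I • X) * jMat X) < 0) := by
  refine ⟨main_eq n X, lam_eq n X hX, fun hX0 => ?_⟩
  rw [lam_eq n X hX]
  have hpos : 0 < ∑ k, ∑ l, ‖X k l‖ ^ 2 := by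
    obtain ⟨k, l, hkl⟩ : ∃ k l, X k l ≠ 0 := by
      by_contra h
      push_neg at h
      exact hX0 (Matrix.ext fun k l => h k l)
    refine Finset.sum_pos' (fun k _ => Finset.sum_nonneg fun l _ => by positivity)
      ⟨k, Finset.mem_univ k, Finset.sum_pos' (fun l _ => by positivity)
        ⟨l, Finset.mem_univ l, pow_pos (norm_pos_iff.mpr hkl) 2⟩⟩
  linarith
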